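/- Let V be a complex normed vector space, let f : Λ₊ → V be discrete analytic on Λ₊, and let g : ℕ → (Λ₊ → V) satisfy: g 0 = f, and for each n, g (n+1) is discrete analytic on Λ₊ with (g (n+1))(0) = 0 and δ_x(g (n+1)) = g n (so g n = Zⁿ f for the primitive operator Z). Then for every z ∈ Λ₊, ‖(g n)(z)‖ → 0 as n → ∞. -/

import Mathlib

open Complex

noncomputable section

/-- The Gaussian integer lattice Λ = ℤ + iℤ. -/
abbrev GI := GaussianInt

/-- The lattice element i. -/
def Ii : GI := ⟨0, 1⟩

/-- The right half-lattice Λ₊ = {z ∈ Λ : Re z ≥ 0}. -/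
def Lp := {z : GI // 0 ≤ z.re}

/-- The point 0 of Λ₊. -/
def pt0 : Lp := ⟨0, le_refl 0⟩

/-- The shift z ↦ z + 1 on Λ₊. -/
def shx (z : Lp) : Lp := ⟨z.1 + 1, by have := z.2; simp [Zsqrtd.re_add]; omega⟩

/-- The shift z ↦ z + i on Λ₊. -/
def shy (z : Lp) : Lp := ⟨z.1 + Ii, by have := z.2; simp [Zsqrtd.re_add, Ii]; omega⟩

/-- α₊ = (1+i)/2. -/
def ap : ℂ := (1 + I) / 2

/-- α₋ = (1−i)/2. -/
def am : ℂ := (1 - I) / 2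

/-- The difference operator δ_x on V-valued functions on Λ₊. -/
def dxV {V : Type*} [AddCommGroup V] (f : Lp → V) : Lp → V := fun z => f (shx z) - f z

/-- Discrete analyticity on Λ₊ for functions with values in a complex vector
space: (f(z+1+i) − f(z))/(1+i) = (f(z+1) − f(z+i))/(1−i). -/
def DApV {V : Type*} [AddCommGroup V] [Module ℂ V] (f : Lp → V) : Prop :=
  ∀ z : Lp, ((1 + I)⁻¹ : ℂ) • (f (shx (shy z)) - f z)
    = ((1 - I)⁻¹ : ℂ) • (f (shx z) - f (shy z))

/-- Points on the imaginary axis. -/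
def pim (y : ℤ) : Lp := ⟨⟨0, y⟩, le_refl 0⟩

lemma pim_shy (y : ℤ) : shy (pim y) = pim (y + 1) := by
  apply Subtype.ext
  show (⟨0, y⟩ : GI) + Ii = ⟨0, y + 1⟩
  simp [Ii, Zsqrtd.ext_iff, Zsqrtd.add_def]

/-- Key recurrence solver. -/
lemma aux_rec (a b : ℕ → ℝ) (C r : ℝ) (hr : 0 ≤ r) (hC : 0 ≤ C) (k : ℕ)
    (hb : ∀ n, b n ≤ C * (n + 1 : ℝ) ^ k * r ^ n)
    (hrec : ∀ n, a (n + 1) ≤ b (n + 1) + r * b n + r * a n)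
    (ha0 : 0 ≤ a 0) :
    ∀ n, a n ≤ (a 0 + 2 * C) * (n + 1 : ℝ) ^ (k + 1) * r ^ n := by
  intro n
  induction n with
  | zero => simp; nlinarith
  | succ n ih =>
      have hYX : ((n : ℝ) + 1) ^ k ≤ ((n : ℝ) + 2) ^ k :=
        pow_le_pow_left₀ (by positivity) (by linarith) k
      have hZ : ((n : ℝ) + 1) ^ (k + 1) ≤ ((n : ℝ) + 2) ^ k * ((n : ℝ) + 1) := by
        rw [pow_succ]
        exact mul_le_mul_of_nonneg_right hYX (by positivity)
      have hD : 0 ≤ a 0 + 2 * C := by linarith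
      have hX0 : (0 : ℝ) ≤ ((n : ℝ) + 2) ^ k := by positivity
      have key : C * ((n : ℝ) + 2) ^ k + C * ((n : ℝ) + 1) ^ k
          + (a 0 + 2 * C) * ((n : ℝ) + 1) ^ (k + 1)
          ≤ (a 0 + 2 * C) * ((n : ℝ) + 2) ^ (k + 1) := by
        have e : ((n : ℝ) + 2) ^ (k + 1) = ((n : ℝ) + 2) ^ k * ((n : ℝ) + 2) := pow_succ _ _
        nlinarith [mul_le_mul_of_nonneg_left hZ hD, mul_le_mul_of_nonneg_left hYX hC,
          mul_nonneg ha0 hX0]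
      have hb1 : b (n + 1) ≤ C * ((n : ℝ) + 2) ^ k * r ^ (n + 1) := by
        have := hb (n + 1)
        have e : ((n + 1 : ℕ) + 1 : ℝ) = (n : ℝ) + 2 := by push_cast; ring
        rwa [e] at this
      calc a (n + 1) ≤ b (n + 1) + r * b n + r * a n := hrec n
        _ ≤ C * ((n : ℝ) + 2) ^ k * r ^ (n + 1) + r * (C * ((n : ℝ) + 1) ^ k * r ^ n)
            + r * ((a 0 + 2 * C) * ((n : ℝ) + 1) ^ (k + 1) * r ^ n) := by
            exact add_le_add (add_le_add hb1
              (mul_le_mul_of_nonneg_left (hb n) hr))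
              (mul_le_mul_of_nonneg_left ih hr)
        _ = (C * ((n : ℝ) + 2) ^ k + C * ((n : ℝ) + 1) ^ k
            + (a 0 + 2 * C) * ((n : ℝ) + 1) ^ (k + 1)) * r ^ (n + 1) := by ring
        _ ≤ (a 0 + 2 * C) * ((n : ℝ) + 2) ^ (k + 1) * r ^ (n + 1) :=
            mul_le_mul_of_nonneg_right key (by positivity)
        _ = (a 0 + 2 * C) * ((n + 1 : ℕ) + 1 : ℝ) ^ (k + 1) * r ^ (n + 1) := by
            push_cast; ring

/-- if f is discrete analytic on Λ₊ with values in a complex normed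
vector space and g n = Zⁿ f (iterated primitives of f vanishing at 0), then
‖(Zⁿ f)(z)‖ → 0 for every z ∈ Λ₊. -/
theorem stmt12 (V : Type*) [NormedAddCommGroup V] [NormedSpace ℂ V]
    (f : Lp → V) (hf : DApV f) (g : ℕ → Lp → V)
    (hg0 : g 0 = f)
    (hgDA : ∀ n, DApV (g (n + 1)))
    (hgz : ∀ n, g (n + 1) pt0 = 0)
    (hgd : ∀ n, dxV (g (n + 1)) = g n) :
    ∀ z : Lp, Filter.Tendsto (fun n => ‖g n z‖) Filter.atTop (nhds 0) := by
  classical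
  -- horizontal recursion
  have hx : ∀ n z, g (n + 1) (shx z) = g (n + 1) z + g n z := by
    intro n z
    have h := congrFun (hgd n) z
    simp only [dxV] at h
    rw [← h]; abel
  -- vertical recursion
  have hy : ∀ n z, g (n + 1) (shy z) = g (n + 1) z + ap • g n z - am • g n (shy z) := by
    intro n z
    have h := hgDA n z
    rw [hx n (shy z), hx n z] at h
    have e1 : ((1 + I : ℂ))⁻¹ = (1 - I) / 2 :=
      (eq_inv_of_mul_eq_one_left (by linear_combination (-1/2 : ℂ) * Complex.I_sq)).symm
    have e2 : ((1 - I : ℂ))⁻¹ = (1 + I) / 2 :=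
      (eq_inv_of_mul_eq_one_left (by linear_combination (-1/2 : ℂ) * Complex.I_sq)).symm
    rw [e1, e2] at h
    simp only [ap, am]
    linear_combination (norm := module) h
  have hy' : ∀ n z, g (n + 1) z
      = g (n + 1) (shy z) - ap • g n z + am • g n (shy z) := by
    intro n z; rw [hy n z]; abel
  -- basic facts about r = ‖am‖
  set r : ℝ := ‖am‖ with hrdef
  have hame : am = ⟨1/2, -1/2⟩ := by
    rw [am]
    apply Complex.ext <;>
      simp [Complex.div_re, Complex.div_im, Complex.normSq_apply] <;> norm_num
  have hr2 : r ^ 2 = 1 / 2 := by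
    rw [hrdef, Complex.sq_norm, hame, Complex.normSq_apply]
    norm_num
  have hr0 : 0 ≤ r := norm_nonneg _
  have hr1 : r < 1 := by nlinarith
  have hrpos : 0 < r := by nlinarith
  have hconj : (starRingEnd ℂ) ap = am := by
    rw [ap, am, map_div₀]
    simp [map_ofNat, sub_eq_add_neg]
  have hrap : ‖ap‖ = r := by rw [hrdef, ← hconj, RCLike.norm_conj]
  -- chains of points along the imaginary axis
  have chain : ∀ (p : ℕ → Lp) (c₁ c₂ : ℂ), ‖c₁‖ = r → ‖c₂‖ = r → p 0 = pt0 →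
      (∀ n k, g (n + 1) (p (k + 1))
        = g (n + 1) (p k) + c₁ • g n (p k) + c₂ • g n (p (k + 1))) →
      ∀ k, ∃ C : ℝ, ∀ n, ‖g n (p k)‖ ≤ C * (n + 1 : ℝ) ^ k * r ^ n := by
    intro p c₁ c₂ hc₁ hc₂ hp0 hrec k
    induction k with
    | zero =>
        refine ⟨‖f pt0‖, fun n => ?_⟩
        rw [hp0]
        cases n with
        | zero => simp [hg0]
        | succ m =>
            rw [hgz m]
            simp only [norm_zero]
            positivity
    | succ k ih =>
        obtain ⟨C, hb⟩ := ih
        have hC : 0 ≤ C := by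
          have h0 := hb 0
          have h1 := norm_nonneg (g 0 (p k))
          simp at h0
          linarith
        refine ⟨‖g 0 (p (k + 1))‖ + 2 * C, ?_⟩
        have := aux_rec (fun n => ‖g n (p (k + 1))‖) (fun n => ‖g n (p k)‖) C r hr0 hC k hb
          ?_ (norm_nonneg _)
        · exact this
        · intro n
          show ‖g (n + 1) (p (k + 1))‖
            ≤ ‖g (n + 1) (p k)‖ + r * ‖g n (p k)‖ + r * ‖g n (p (k + 1))‖
          rw [hrec n k]
          calc ‖g (n + 1) (p k) + c₁ • g n (p k) + c₂ • g n (p (k + 1))‖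
              ≤ ‖g (n + 1) (p k)‖ + ‖c₁ • g n (p k)‖ + ‖c₂ • g n (p (k + 1))‖ :=
                norm_add₃_le
            _ = ‖g (n + 1) (p k)‖ + r * ‖g n (p k)‖ + r * ‖g n (p (k + 1))‖ := by
                rw [norm_smul, norm_smul, hc₁, hc₂]
  -- geometric-type limit
  have vlim : ∀ (C : ℝ) (k : ℕ),
      Filter.Tendsto (fun n : ℕ => C * ((n : ℝ) + 1) ^ k * r ^ n)
        Filter.atTop (nhds 0) := by
    intro C k
    have h1 := tendsto_pow_const_mul_const_pow_of_lt_one k hr0 hr1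
    have h2 := h1.comp (Filter.tendsto_add_atTop_nat 1)
    have h3 := h2.const_mul (C / r)
    rw [mul_zero] at h3
    apply h3.congr
    intro n
    simp only [Function.comp]
    push_cast
    field_simp
    ring
  -- tendsto on the imaginary axis
  have vtend : ∀ y : ℤ, Filter.Tendsto (fun n => g n (pim y)) Filter.atTop (nhds 0) := by
    intro y
    have hbdd : ∃ (k : ℕ) (C : ℝ), ∀ n, ‖g n (pim y)‖ ≤ C * ((n : ℝ) + 1) ^ k * r ^ n := by
      rcases le_or_gt 0 y with hy0 | hy0
      · obtain ⟨k, rfl⟩ : ∃ k : ℕ, y = (k : ℤ) := ⟨y.toNat, (Int.toNat_of_nonneg hy0).symm⟩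
        obtain ⟨C, hC⟩ := chain (fun k => pim (k : ℤ)) ap (-am) hrap (by rw [norm_neg])
          (by apply Subtype.ext; rfl)
          (fun n j => by
            have h := hy n (pim (j : ℤ))
            rw [pim_shy] at h
            push_cast
            rw [h]
            rw [sub_eq_add_neg, neg_smul]) k
        exact ⟨k, C, hC⟩
      · obtain ⟨k, rfl⟩ : ∃ k : ℕ, y = -(k : ℤ) := ⟨(-y).toNat, by omega⟩
        obtain ⟨C, hC⟩ := chain (fun k => pim (-(k : ℤ))) am (-ap) rfl (by rw [norm_neg, hrap])
          (by
            apply Subtype.ext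
            show (⟨0, -((0:ℕ) : ℤ)⟩ : GI) = 0
            simp [Zsqrtd.ext_iff])
          (fun n j => by
            have e : shy (pim (-(((j + 1 : ℕ)) : ℤ))) = pim (-(j : ℤ)) := by
              rw [pim_shy]; congr 1; push_cast; ring
            have h := hy' n (pim (-(((j + 1 : ℕ)) : ℤ)))
            rw [e] at h
            rw [h, neg_smul]
            abel) k
        exact ⟨k, C, hC⟩
    obtain ⟨k, C, hC⟩ := hbdd
    exact squeeze_zero_norm hC (vlim C k)
  -- tendsto on the whole half lattice
  let pxy : ℕ → ℤ → Lp := fun x y => ⟨⟨(x : ℤ), y⟩, Int.natCast_nonneg x⟩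
  have hshx : ∀ x y, shx (pxy x y) = pxy (x + 1) y := by
    intro x y
    apply Subtype.ext
    show (⟨(x : ℤ), y⟩ : GI) + 1 = ⟨((x + 1 : ℕ) : ℤ), y⟩
    simp [Zsqrtd.ext_iff, Zsqrtd.add_def]
  have hor : ∀ (x : ℕ) (y : ℤ),
      Filter.Tendsto (fun n => g n (pxy x y)) Filter.atTop (nhds 0) := by
    intro x
    induction x with
    | zero =>
        intro y
        have e : pxy 0 y = pim y := by apply Subtype.ext; simp [pim, pxy]
        rw [e]
        exact vtend y
    | succ x ih =>
        intro y
        have hsum := (ih y).add ((ih y).comp (Filter.tendsto_sub_atTop_nat 1))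
        rw [add_zero] at hsum
        apply hsum.congr'
        filter_upwards [Filter.eventually_ge_atTop 1] with n hn
        match n, hn with
        | (m + 1), _ =>
          simp only [Function.comp, Nat.add_sub_cancel]
          rw [← hshx, hx m (pxy x y)]
  intro z
  obtain ⟨⟨a, b⟩, hz⟩ := z
  have ha : 0 ≤ a := hz
  obtain ⟨x, rfl⟩ : ∃ x : ℕ, a = (x : ℤ) := ⟨a.toNat, (Int.toNat_of_nonneg ha).symm⟩
  exact tendsto_zero_iff_norm_tendsto_zero.mp (hor x b)
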